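/- arXiv:0811.2649 — 3 statements merged into one kernel-verified Lean document; each statement's English description precedes it below -/
import Mathlib

section
/- Let \sigma_\mu(y) = \|K_\mu(\cdot,y)\|_{L^2} and define \tilde{\sigma}_\mu(x) = max( sup_{\nu \in \Theta} \int |K_\nu(y,x)| \sigma_\mu(y) dy , \sigma_\mu(x) ). Then for the composed kernel K_{\mu,\nu}(t,x) = \int K_\mu(t,y)K_\nu(y,x)dy, one has the variance bound \sigma_{\mu,\nu}(x) := \|K_{\mu,\nu}(\cdot,x) - K_\nu(\cdot,x)\|_{L^2} \leq \tilde{\sigma}_\mu(x) + \tilde{\sigma}_\nu(x), where the key step is the Minkowski integral inequality \|K_{\mu,\nu}(\cdot,x)\|_{L^2} \leq \int |K_\nu(y,x)| \, \|K_\mu(\cdot,y)\|_{L^2} dy \leq \tilde{\sigma}_\mu(x). -/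
open MeasureTheory ENNReal

section helpers

variable {α : Type*} [MeasurableSpace α] {m : Measure α}

lemma lintegral_nnnorm_sq_eq {f : α → ℝ} (hf : Integrable (fun t => f t ^ 2) m) :
    ∫⁻ t, (‖f t‖₊ : ℝ≥0∞) ^ 2 ∂m = ENNReal.ofReal (∫ t, f t ^ 2 ∂m) := by
  rw [MeasureTheory.ofReal_integral_eq_lintegral_ofReal hf
    (Filter.Eventually.of_forall fun t => sq_nonneg _)]
  congr 1
  ext t
  rw [← enorm_eq_nnnorm, Real.enorm_eq_ofReal_abs, ← ENNReal.ofReal_pow (abs_nonneg _), sq_abs]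

lemma eLpNorm_two_eq {f : α → ℝ} (hf : Integrable (fun t => f t ^ 2) m) :
    eLpNorm f 2 m = ENNReal.ofReal (Real.sqrt (∫ t, f t ^ 2 ∂m)) := by
  rw [eLpNorm_eq_lintegral_rpow_enorm_toReal two_ne_zero ENNReal.ofNat_ne_top]
  have h1 : ∫⁻ t, (‖f t‖₊ : ℝ≥0∞) ^ ((2 : ℝ≥0∞).toReal) ∂m
      = ENNReal.ofReal (∫ t, f t ^ 2 ∂m) := by
    rw [← lintegral_nnnorm_sq_eq hf]
    congr 1
    ext t
    rw [ENNReal.toReal_ofNat, show ((2:ℝ)) = ((2:ℕ):ℝ) by norm_num, ENNReal.rpow_natCast]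
  erw [h1, Real.sqrt_eq_rpow,
    ENNReal.ofReal_rpow_of_nonneg (integral_nonneg fun t => sq_nonneg _) (by norm_num)]
  norm_num

end helpers

/-- Variance bound (18): with `σ_μ(y) = ‖K_μ(·,y)‖₂` and
`σ̃_μ(x) = max(sup_{ν∈Θ} ∫ |K_ν(y,x)| σ_μ(y) dy, σ_μ(x))`, the composed kernel
`K_{μ,ν}(t,x) = ∫ K_μ(t,y)K_ν(y,x)dy` satisfies
`‖K_{μ,ν}(·,x)‖₂ ≤ σ̃_μ(x)` (Minkowski integral inequality) and
`σ_{μ,ν}(x) = ‖K_{μ,ν}(·,x) - K_ν(·,x)‖₂ ≤ σ̃_μ(x) + σ̃_ν(x)`. -/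
theorem composed_kernel_variance_bound {d : ℕ} {Θ : Type*}
    (K : Θ → (Fin d → ℝ) → (Fin d → ℝ) → ℝ)
    (hmeas : ∀ θ, Measurable (Function.uncurry (K θ)))
    (hL2 : ∀ θ x, Integrable (fun t => (K θ t x) ^ 2))
    (hL2' : ∀ θ, ∃ C, ∀ x, (∫ t, (K θ t x) ^ 2) ≤ C)
    (hL1 : ∀ θ x, Integrable (fun t => K θ t x))
    (hL1' : ∀ θ, ∃ C, ∀ x, (∫ t, |K θ t x|) ≤ C)
    (σ : Θ → (Fin d → ℝ) → ℝ)
    (hσ : ∀ θ y, σ θ y = Real.sqrt (∫ t, (K θ t y) ^ 2))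
    (tσ : Θ → (Fin d → ℝ) → ℝ)
    (htσ1 : ∀ θ x θ', (∫ y, |K θ' y x| * σ θ y) ≤ tσ θ x)
    (htσ2 : ∀ θ x, σ θ x ≤ tσ θ x)
    (μ ν : Θ) (x : Fin d → ℝ) :
    Real.sqrt (∫ t, (∫ y, K μ t y * K ν y x) ^ 2) ≤ tσ μ x ∧
    Real.sqrt (∫ t, ((∫ y, K μ t y * K ν y x) - K ν t x) ^ 2) ≤ tσ μ x + tσ ν x := by
  set H : (Fin d → ℝ) → ℝ := fun t => ∫ y, K μ t y * K ν y x with hHdef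
  -- basic nonnegativity
  have hσ_nonneg : ∀ θ y, 0 ≤ σ θ y := fun θ y => (hσ θ y) ▸ Real.sqrt_nonneg _
  have htσμ_nonneg : 0 ≤ tσ μ x := le_trans (hσ_nonneg μ x) (htσ2 μ x)
  have htσν_nonneg : 0 ≤ tσ ν x := le_trans (hσ_nonneg ν x) (htσ2 ν x)
  -- measurability
  have mKμ : Measurable (Function.uncurry (K μ)) := hmeas μ
  have mKν : Measurable (Function.uncurry (K ν)) := hmeas ν
  have mνx : Measurable fun y : (Fin d → ℝ) => K ν y x :=
    mKν.comp (measurable_id.prodMk measurable_const)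
  have mprod : Measurable fun p : (Fin d → ℝ) × (Fin d → ℝ) => K μ p.1 p.2 * K ν p.2 x :=
    mKμ.mul (mνx.comp measurable_snd)
  have mH : Measurable H :=
    (mprod.stronglyMeasurable.integral_prod_right').measurable
  have mσμ : Measurable (σ μ) := by
    have h1 : Measurable fun y : (Fin d → ℝ) => ∫ t, (K μ t y) ^ 2 := by
      have : Measurable fun p : (Fin d → ℝ) × (Fin d → ℝ) => (K μ p.2 p.1) ^ 2 :=
        (mKμ.comp measurable_swap).pow_const 2
      exact (this.stronglyMeasurable.integral_prod_right').measurable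
    have : σ μ = fun y => Real.sqrt (∫ t, (K μ t y) ^ 2) := funext (hσ μ)
    rw [this]
    exact Real.continuous_sqrt.measurable.comp h1
  have msliceμ : ∀ y : (Fin d → ℝ), Measurable fun t : (Fin d → ℝ) => (‖K μ t y‖₊ : ℝ≥0∞) :=
    fun y => (mKμ.comp (measurable_id.prodMk measurable_const)).enorm
  -- the ℝ≥0∞-valued kernel
  set a : (Fin d → ℝ) → (Fin d → ℝ) → ℝ≥0∞ := fun t y => (‖K μ t y‖₊ : ℝ≥0∞) * (‖K ν y x‖₊ : ℝ≥0∞) with hadef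
  have ma : Measurable fun p : (Fin d → ℝ) × (Fin d → ℝ) => a p.1 p.2 :=
    mKμ.enorm.mul ((mνx.comp measurable_snd).enorm)
  -- the ℝ≥0∞-valued majorant
  set b : (Fin d → ℝ) → ℝ≥0∞ := fun y => (‖K ν y x‖₊ : ℝ≥0∞) * ENNReal.ofReal (σ μ y) with hbdef
  have mb : Measurable b := mνx.enorm.mul (ENNReal.measurable_ofReal.comp mσμ)
  -- L² norms of slices
  have key6 : ∀ y : (Fin d → ℝ),
      (∫⁻ t, (‖K μ t y‖₊ : ℝ≥0∞) ^ (2:ℝ)) ^ (1/2 : ℝ) = ENNReal.ofReal (σ μ y) := by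
    intro y
    have h2 : ∫⁻ t, (‖K μ t y‖₊ : ℝ≥0∞) ^ (2:ℝ) = ENNReal.ofReal (∫ t, (K μ t y) ^ 2) := by
      rw [← lintegral_nnnorm_sq_eq (hL2 μ y)]
      congr 1
      ext t
      rw [show ((2:ℝ)) = ((2:ℕ):ℝ) by norm_num, ENNReal.rpow_natCast]
    rw [h2, hσ μ y, Real.sqrt_eq_rpow,
      ENNReal.ofReal_rpow_of_nonneg (integral_nonneg fun t => sq_nonneg _) (by norm_num)]
  -- Cauchy-Schwarz in t
  have CS : ∀ y z : (Fin d → ℝ), (∫⁻ t, a t y * a t z) ≤ b y * b z := by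
    intro y z
    have hrw : ∀ t, a t y * a t z =
        ((‖K ν y x‖₊ : ℝ≥0∞) * (‖K ν z x‖₊ : ℝ≥0∞)) *
          ((‖K μ t y‖₊ : ℝ≥0∞) * (‖K μ t z‖₊ : ℝ≥0∞)) := by
      intro t; simp only [hadef]; ring
    simp only [hrw]
    rw [lintegral_const_mul'' _ (f := fun t => (‖K μ t y‖₊ : ℝ≥0∞) * (‖K μ t z‖₊ : ℝ≥0∞))
      ((msliceμ y).mul (msliceμ z)).aemeasurable]
    have hold := ENNReal.lintegral_mul_le_Lp_mul_Lq (volume : Measure (Fin d → ℝ))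
      (Real.HolderConjugate.two_two : Real.HolderConjugate 2 2)
      (msliceμ y).aemeasurable (msliceμ z).aemeasurable
    simp only [Pi.mul_apply] at hold
    calc ((‖K ν y x‖₊ : ℝ≥0∞) * (‖K ν z x‖₊ : ℝ≥0∞)) *
          ∫⁻ t, (‖K μ t y‖₊ : ℝ≥0∞) * (‖K μ t z‖₊ : ℝ≥0∞)
        ≤ ((‖K ν y x‖₊ : ℝ≥0∞) * (‖K ν z x‖₊ : ℝ≥0∞)) *
          ((∫⁻ t, (‖K μ t y‖₊ : ℝ≥0∞) ^ (2:ℝ)) ^ (1/2:ℝ) *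
           (∫⁻ t, (‖K μ t z‖₊ : ℝ≥0∞) ^ (2:ℝ)) ^ (1/2:ℝ)) :=
          mul_le_mul_right hold _
      _ = b y * b z := by rw [key6 y, key6 z]; simp only [hbdef]; ring
  -- pointwise bound on H
  have hHpt : ∀ t, (‖H t‖₊ : ℝ≥0∞) ≤ ∫⁻ y, a t y := by
    intro t
    refine le_trans (enorm_integral_le_lintegral_enorm _) (le_of_eq ?_)
    congr 1
    ext y
    rw [hadef]
    simp [nnnorm_mul, ENNReal.coe_mul]; rfl
  -- integrability of b-related real function
  have hbint : Integrable (fun y => |K ν y x| * σ μ y) := by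
    obtain ⟨C, hC⟩ := hL2' μ
    have h1 : Integrable (fun y : (Fin d → ℝ) => σ μ y * |K ν y x|) := by
      refine (hL1 ν x).abs.bdd_mul mσμ.aestronglyMeasurable (c := Real.sqrt C) (Filter.Eventually.of_forall fun y => ?_)
      rw [Real.norm_eq_abs, abs_of_nonneg (hσ_nonneg μ y), hσ μ y]
      exact Real.sqrt_le_sqrt (hC y)
    exact h1.congr (Filter.Eventually.of_forall fun y => mul_comm _ _)
  have hbeq : ∀ y, b y = ENNReal.ofReal (|K ν y x| * σ μ y) := by
    intro y
    simp only [hbdef]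
    rw [ENNReal.ofReal_mul (abs_nonneg _), ← enorm_eq_nnnorm, Real.enorm_eq_ofReal_abs]
  have hbB : ∫⁻ y, b y = ENNReal.ofReal (∫ y, |K ν y x| * σ μ y) := by
    simp only [hbeq]
    exact (MeasureTheory.ofReal_integral_eq_lintegral_ofReal hbint
      (Filter.Eventually.of_forall fun y => mul_nonneg (abs_nonneg _) (hσ_nonneg μ y))).symm
  have hbtσ : ∫⁻ y, b y ≤ ENNReal.ofReal (tσ μ x) := by
    rw [hbB]; exact ENNReal.ofReal_le_ofReal (htσ1 μ x ν)
  -- the Fubini computation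
  have hswap1 : ∀ y : (Fin d → ℝ), (∫⁻ t, ∫⁻ z, a t y * a t z) = ∫⁻ z, ∫⁻ t, a t y * a t z := by
    intro y
    refine lintegral_lintegral_swap ?_
    exact ((ma.comp ((measurable_fst).prodMk (measurable_const : Measurable fun _ : (Fin d → ℝ) × (Fin d → ℝ) => y))).mul
      (ma.comp ((measurable_fst).prodMk measurable_snd))).aemeasurable
  have hmain : (∫⁻ t, (∫⁻ y, a t y) ^ 2) = ∫⁻ y, ∫⁻ t, ∫⁻ z, a t y * a t z := by
    have step1 : ∀ t, (∫⁻ y, a t y) ^ 2 = ∫⁻ y, ∫⁻ z, a t y * a t z := by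
      intro t
      have ha_t : AEMeasurable (a t) := (ma.comp ((measurable_const :
        Measurable fun _ : (Fin d → ℝ) => t).prodMk measurable_id)).aemeasurable
      rw [sq, ← lintegral_mul_const'' _ ha_t]
      congr 1
      ext y
      rw [← lintegral_const_mul'' _ ha_t]
    simp only [step1]
    refine lintegral_lintegral_swap ?_
    -- uncurry (fun t y => ∫⁻ z, a t y * a t z)
    refine Measurable.aemeasurable ?_
    exact Measurable.lintegral_prod_right'
      ((ma.comp ((measurable_fst.comp measurable_fst).prodMk (measurable_snd.comp measurable_fst))).mul
       (ma.comp ((measurable_fst.comp measurable_fst).prodMk measurable_snd)))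
  -- master bound in ℝ≥0∞
  have master : (∫⁻ t, (‖H t‖₊ : ℝ≥0∞) ^ 2) ≤ ENNReal.ofReal ((tσ μ x) ^ 2) := by
    calc (∫⁻ t, (‖H t‖₊ : ℝ≥0∞) ^ 2)
        ≤ ∫⁻ t, (∫⁻ y, a t y) ^ 2 :=
          lintegral_mono fun t => pow_le_pow_left₀ zero_le (hHpt t) 2
      _ = ∫⁻ y, ∫⁻ t, ∫⁻ z, a t y * a t z := hmain
      _ = ∫⁻ y, ∫⁻ z, ∫⁻ t, a t y * a t z := lintegral_congr fun y => hswap1 y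
      _ ≤ ∫⁻ y, ∫⁻ z, b y * b z :=
          lintegral_mono fun y => lintegral_mono fun z => CS y z
      _ = (∫⁻ y, b y) * (∫⁻ z, b z) := by
          rw [← lintegral_mul_const'' _ mb.aemeasurable]
          congr 1
          ext y
          rw [← lintegral_const_mul'' _ mb.aemeasurable]
      _ ≤ ENNReal.ofReal (tσ μ x) * ENNReal.ofReal (tσ μ x) := mul_le_mul' hbtσ hbtσ
      _ = ENNReal.ofReal ((tσ μ x) ^ 2) := by
          rw [← ENNReal.ofReal_mul htσμ_nonneg, sq]
  -- integrability of H²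
  have hHsq : Integrable (fun t => H t ^ 2) := by
    refine ⟨(mH.pow_const 2).aestronglyMeasurable, ?_⟩
    rw [hasFiniteIntegral_iff_norm]
    have : ∀ t, ENNReal.ofReal ‖H t ^ 2‖ = (‖H t‖₊ : ℝ≥0∞) ^ 2 := by
      intro t
      rw [Real.norm_eq_abs, abs_of_nonneg (sq_nonneg _), ← enorm_eq_nnnorm, Real.enorm_eq_ofReal_abs,
        ← ENNReal.ofReal_pow (abs_nonneg _), sq_abs]
    simp only [this]
    exact lt_of_le_of_lt master ENNReal.ofReal_lt_top
  -- Part 1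
  have part1 : Real.sqrt (∫ t, H t ^ 2) ≤ tσ μ x := by
    have h1 : ENNReal.ofReal (∫ t, H t ^ 2) ≤ ENNReal.ofReal ((tσ μ x) ^ 2) := by
      rw [← lintegral_nnnorm_sq_eq hHsq]; exact master
    have h2 : (∫ t, H t ^ 2) ≤ (tσ μ x) ^ 2 :=
      (ENNReal.ofReal_le_ofReal_iff (sq_nonneg _)).1 h1
    calc Real.sqrt (∫ t, H t ^ 2) ≤ Real.sqrt ((tσ μ x) ^ 2) := Real.sqrt_le_sqrt h2
      _ = tσ μ x := Real.sqrt_sq htσμ_nonneg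
  refine ⟨part1, ?_⟩
  -- Part 2
  have memH : MemLp H 2 (volume : Measure (Fin d → ℝ)) :=
    (memLp_two_iff_integrable_sq mH.aestronglyMeasurable).2 hHsq
  have memK : MemLp (fun t : (Fin d → ℝ) => K ν t x) 2 (volume : Measure (Fin d → ℝ)) :=
    (memLp_two_iff_integrable_sq mνx.aestronglyMeasurable).2 (hL2 ν x)
  have hsubsq : Integrable (fun t => (H t - K ν t x) ^ 2) :=
    (memLp_two_iff_integrable_sq (mH.sub mνx).aestronglyMeasurable).1 (memH.sub memK)
  have htri : eLpNorm (H - fun t : (Fin d → ℝ) => K ν t x) 2 volume ≤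
      eLpNorm H 2 volume + eLpNorm (fun t : (Fin d → ℝ) => K ν t x) 2 volume :=
    eLpNorm_sub_le mH.aestronglyMeasurable mνx.aestronglyMeasurable one_le_two
  have e1 : eLpNorm (H - fun t : (Fin d → ℝ) => K ν t x) 2 volume
      = ENNReal.ofReal (Real.sqrt (∫ t, (H t - K ν t x) ^ 2)) := eLpNorm_two_eq hsubsq
  have e2 : eLpNorm H 2 volume = ENNReal.ofReal (Real.sqrt (∫ t, H t ^ 2)) :=
    eLpNorm_two_eq hHsq
  have e3 : eLpNorm (fun t : (Fin d → ℝ) => K ν t x) 2 volume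
      = ENNReal.ofReal (Real.sqrt (∫ t, (K ν t x) ^ 2)) := eLpNorm_two_eq (hL2 ν x)
  rw [e1, e2, e3, ← ENNReal.ofReal_add (Real.sqrt_nonneg _) (Real.sqrt_nonneg _)] at htri
  have h4 : Real.sqrt (∫ t, (H t - K ν t x) ^ 2)
      ≤ Real.sqrt (∫ t, H t ^ 2) + Real.sqrt (∫ t, (K ν t x) ^ 2) :=
    (ENNReal.ofReal_le_ofReal_iff (add_nonneg (Real.sqrt_nonneg _) (Real.sqrt_nonneg _))).1 htri
  calc Real.sqrt (∫ t, (H t - K ν t x) ^ 2)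
      ≤ Real.sqrt (∫ t, H t ^ 2) + Real.sqrt (∫ t, (K ν t x) ^ 2) := h4
    _ ≤ tσ μ x + tσ ν x := by
        refine add_le_add part1 ?_
        rw [← hσ ν x]
        exact htσ2 ν x
end

section
/- Let Y be a nonnegative random variable, e \geq 0, \sigma > 0, and suppose P(Y > e + u) \leq 2 exp(-u^2/(2\sigma^2)) for all u > 0. Then for r > 1, E[Y^r] \leq e^r + 2r \int_0^\infty (t + e)^{r-1} exp(-t^2/(2\sigma^2)) dt \leq 8r (e + \sigma)^r \int_0^\infty (t \vee 1)^{r-1} exp(-t^2/2) dt. -/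
open MeasureTheory Set

private lemma shift_Ioi_key (f : ℝ → ℝ) (e u : ℝ) :
    (Set.Ioi e).indicator f (u + e) = (Set.Ioi (0:ℝ)).indicator (fun v => f (v + e)) u := by
  simp only [Set.indicator_apply, Set.mem_Ioi, lt_add_iff_pos_left]

private lemma shift_Ioi_integral (f : ℝ → ℝ) (e : ℝ) :
    (∫ t in Set.Ioi e, f t) = ∫ u in Set.Ioi (0:ℝ), f (u + e) := by
  have hmp : MeasurePreserving (fun x : ℝ => x + e) volume volume :=
    measurePreserving_add_right volume e
  have hemb : MeasurableEmbedding (fun x : ℝ => x + e) :=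
    (MeasurableEquiv.addRight e).measurableEmbedding
  rw [← integral_indicator measurableSet_Ioi, ← integral_indicator measurableSet_Ioi,
    ← hmp.integral_comp hemb ((Set.Ioi e).indicator f)]
  exact integral_congr_ae (Filter.Eventually.of_forall fun u => shift_Ioi_key f e u)

private lemma shift_Ioi_integrableOn {f : ℝ → ℝ} {e : ℝ}
    (h : IntegrableOn (fun u => f (u + e)) (Set.Ioi (0:ℝ))) :
    IntegrableOn f (Set.Ioi e) := by
  rw [← integrable_indicator_iff measurableSet_Ioi] at h ⊢
  have hmp : MeasurePreserving (fun x : ℝ => x + e) volume volume :=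
    measurePreserving_add_right volume e
  have hemb : MeasurableEmbedding (fun x : ℝ => x + e) :=
    (MeasurableEquiv.addRight e).measurableEmbedding
  rw [← hmp.integrable_comp_emb hemb]
  have : ((Set.Ioi e).indicator f) ∘ (fun x : ℝ => x + e)
      = (Set.Ioi (0:ℝ)).indicator (fun u => f (u + e)) := funext fun u => shift_Ioi_key f e u
  rw [this]; exact h

private lemma aux_integrableOn {b r : ℝ} (hb : 0 < b) (hr : 1 < r) {g : ℝ → ℝ}
    (hg : Measurable g)
    (hbound : ∀ t : ℝ, 0 < t → |g t| ≤ t ^ (r - 1) + 1) :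
    IntegrableOn (fun t => g t * Real.exp (-b * t ^ 2)) (Set.Ioi (0:ℝ)) := by
  have h1 : Integrable (fun t : ℝ => t ^ (r-1) * Real.exp (-b * t ^ 2) + Real.exp (-b * t ^ 2)) :=
    (integrable_rpow_mul_exp_neg_mul_sq hb (by linarith)).add (integrable_exp_neg_mul_sq hb)
  refine (h1.restrict (s := Set.Ioi 0)).mono' ?_ ?_
  · exact ((hg.mul (by fun_prop)).aestronglyMeasurable)
  · rw [ae_restrict_iff' measurableSet_Ioi]
    refine Filter.Eventually.of_forall fun t ht => ?_
    have h2 : (0:ℝ) < t := ht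
    have hexp : 0 < Real.exp (-b * t ^ 2) := Real.exp_pos _
    have hbd := hbound t h2
    have habs : |g t| * Real.exp (-b * t ^ 2) ≤ (t ^ (r-1) + 1) * Real.exp (-b * t ^ 2) :=
      mul_le_mul_of_nonneg_right hbd hexp.le
    calc ‖g t * Real.exp (-b * t ^ 2)‖ = |g t| * Real.exp (-b * t ^ 2) := by
          rw [Real.norm_eq_abs, abs_mul, abs_of_pos hexp]
      _ ≤ (t ^ (r-1) + 1) * Real.exp (-b * t ^ 2) := habs
      _ = t ^ (r-1) * Real.exp (-b * t ^ 2) + Real.exp (-b * t ^ 2) := by ring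

private lemma bound1 {e r : ℝ} (he : 0 ≤ e) (hr : 1 < r) (t : ℝ) (ht : 0 < t) :
    (t + e) ^ (r - 1) ≤ (1 + e) ^ (r-1) * t ^ (r - 1) + (1 + e) ^ (r - 1) := by
  have h1 : (0:ℝ) ≤ r - 1 := by linarith
  have hte : (0:ℝ) ≤ t + e := by linarith
  have h1e : (0:ℝ) ≤ 1 + e := by linarith
  rcases le_total t 1 with h | h
  · have : (t + e) ^ (r-1) ≤ (1 + e) ^ (r-1) := Real.rpow_le_rpow hte (by linarith) h1
    have h2 : 0 ≤ (1+e)^(r-1) := Real.rpow_nonneg h1e _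
    have h3 : 0 ≤ t ^ (r-1) := Real.rpow_nonneg ht.le _
    nlinarith
  · have : (t + e) ^ (r-1) ≤ ((1 + e) * t) ^ (r-1) := by
      apply Real.rpow_le_rpow hte (by nlinarith) h1
    rw [Real.mul_rpow h1e ht.le] at this
    have h2 : 0 ≤ (1+e)^(r-1) := Real.rpow_nonneg h1e _
    linarith

private lemma I1_integrable {e σ r : ℝ} (he : 0 ≤ e) (hσ : 0 < σ) (hr : 1 < r) :
    IntegrableOn (fun t => (t + e) ^ (r - 1) * Real.exp (-t ^ 2 / (2 * σ ^ 2))) (Set.Ioi (0:ℝ)) := by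
  have hb : (0:ℝ) < (2 * σ ^ 2)⁻¹ := by positivity
  have key := aux_integrableOn (g := fun t => (1 + e)⁻¹ ^ (r-1) * (t + e) ^ (r - 1)) hb hr
    (by fun_prop) ?_
  · have h1e : (0:ℝ) < 1 + e := by linarith
    have h2 := key.const_mul ((1 + e) ^ (r-1))
    refine IntegrableOn.congr_fun h2 (fun t ht => ?_) measurableSet_Ioi
    have hC : ((1+e):ℝ)^(r-1) ≠ 0 := (Real.rpow_pos_of_pos h1e _).ne'
    have harg : -(2 * σ ^ 2)⁻¹ * t ^ 2 = -t ^ 2 / (2 * σ ^ 2) := by field_simp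
    rw [← harg, Real.inv_rpow h1e.le]
    field_simp
  · intro t ht
    have h1e : (0:ℝ) < 1 + e := by linarith
    have hnn : 0 ≤ (1 + e)⁻¹ ^ (r-1) * (t + e) ^ (r - 1) := by positivity
    rw [abs_of_nonneg hnn]
    have := bound1 he hr t ht
    have h2 : 0 < (1+e)^(r-1) := Real.rpow_pos_of_pos h1e _
    rw [Real.inv_rpow h1e.le, inv_mul_le_iff₀ h2]
    calc (t+e)^(r-1) ≤ (1+e)^(r-1) * t^(r-1) + (1+e)^(r-1) := this
      _ = (1+e)^(r-1) * (t^(r-1) + 1) := by ring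

private lemma I2_integrable {r : ℝ} (hr : 1 < r) :
    IntegrableOn (fun t => (max t 1) ^ (r - 1) * Real.exp (-t ^ 2 / 2)) (Set.Ioi (0:ℝ)) := by
  have hb : (0:ℝ) < (2:ℝ)⁻¹ := by norm_num
  have key := aux_integrableOn (g := fun t => (max t 1) ^ (r - 1)) hb hr (by fun_prop) ?_
  · refine IntegrableOn.congr_fun key (fun t ht => ?_) measurableSet_Ioi
    rw [show -((2:ℝ))⁻¹ * t ^ 2 = -t ^ 2 / 2 by ring]
  · intro t ht
    have h1 : (1:ℝ) ≤ max t 1 := le_max_right _ _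
    have hnn : 0 ≤ (max t 1) ^ (r-1) := Real.rpow_nonneg (by linarith) _
    rw [abs_of_nonneg hnn]
    rcases le_total t 1 with h | h
    · rw [max_eq_right h, Real.one_rpow]
      have : 0 ≤ t ^ (r-1) := Real.rpow_nonneg ht.le _
      linarith
    · rw [max_eq_left h]
      have : 0 ≤ t ^ (r-1) := Real.rpow_nonneg ht.le _
      linarith

/-- Abstract tail-to-moment bound (proof of Lemma A.1): if `Y ≥ 0` satisfies
`P(Y > e + u) ≤ 2 exp(-u²/(2σ²))` for all `u > 0`, then for `r > 1`,
`E[Y^r] ≤ e^r + 2r ∫₀^∞ (t+e)^{r-1} exp(-t²/(2σ²)) dt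
       ≤ 8r (e+σ)^r ∫₀^∞ (t ∨ 1)^{r-1} exp(-t²/2) dt`. -/
theorem tail_to_moment_bound {Ω : Type*} [MeasurableSpace Ω]
    (P : Measure Ω) [IsProbabilityMeasure P]
    (Y : Ω → ℝ) (hYmeas : Measurable Y) (hYnn : ∀ ω, 0 ≤ Y ω)
    (e σ : ℝ) (he : 0 ≤ e) (hσ : 0 < σ)
    (htail : ∀ u : ℝ, 0 < u →
      (P {ω | Y ω > e + u}).toReal ≤ 2 * Real.exp (-u ^ 2 / (2 * σ ^ 2)))
    (r : ℝ) (hr : 1 < r) :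
    (∫ ω, Y ω ^ r ∂P) ≤
        e ^ r + 2 * r * ∫ t in Set.Ioi (0 : ℝ), (t + e) ^ (r - 1) * Real.exp (-t ^ 2 / (2 * σ ^ 2)) ∧
    e ^ r + 2 * r * (∫ t in Set.Ioi (0 : ℝ), (t + e) ^ (r - 1) * Real.exp (-t ^ 2 / (2 * σ ^ 2))) ≤
        8 * r * (e + σ) ^ r * ∫ t in Set.Ioi (0 : ℝ), (max t 1) ^ (r - 1) * Real.exp (-t ^ 2 / 2) := by
  have hr0 : (0:ℝ) < r := by linarith
  set I1 := ∫ t in Set.Ioi (0 : ℝ), (t + e) ^ (r - 1) * Real.exp (-t ^ 2 / (2 * σ ^ 2)) with hI1def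
  set I2 := ∫ t in Set.Ioi (0 : ℝ), (max t 1) ^ (r - 1) * Real.exp (-t ^ 2 / 2) with hI2def
  have I1int := I1_integrable he hσ hr
  have I2int := I2_integrable (r := r) hr
  have I1nn : 0 ≤ I1 := setIntegral_nonneg measurableSet_Ioi fun t ht =>
    mul_nonneg (Real.rpow_nonneg (by have := Set.mem_Ioi.mp ht; linarith) _) (Real.exp_pos _).le
  have I2nn : 0 ≤ I2 := setIntegral_nonneg measurableSet_Ioi fun t ht =>
    mul_nonneg (Real.rpow_nonneg (le_trans zero_le_one (le_max_right _ _)) _) (Real.exp_pos _).le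
  constructor
  · -- Part 1
    by_cases hY : Integrable (fun ω => Y ω ^ r) P
    · set G : ℝ → ℝ := fun t =>
        if t ≤ e then t ^ (r-1) else t ^ (r-1) * (2 * Real.exp (-(t-e)^2 / (2*σ^2))) with hGdef
      have hGshift : ∀ u : ℝ, u ∈ Set.Ioi (0:ℝ) →
          G (u + e) = 2 * ((u + e) ^ (r - 1) * Real.exp (-u ^ 2 / (2 * σ ^ 2))) := by
        intro u hu
        have hu' : (0:ℝ) < u := hu
        simp only [hGdef]
        rw [if_neg (by linarith), show u + e - e = u by ring]
        ring
      have hGIoc : IntegrableOn G (Set.Ioc (0:ℝ) e) := by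
        refine IntegrableOn.congr_fun
          ((intervalIntegral.intervalIntegrable_rpow' (a := 0) (b := e) (by linarith : (-1:ℝ) < r - 1)).1)
          (fun t ht => ?_) measurableSet_Ioc
        exact (if_pos ht.2).symm
      have hGIoiE : IntegrableOn G (Set.Ioi e) := by
        apply shift_Ioi_integrableOn
        exact IntegrableOn.congr_fun (I1int.const_mul 2)
          (fun u hu => (hGshift u hu).symm) measurableSet_Ioi
      have hGIoi : IntegrableOn G (Set.Ioi (0:ℝ)) := by
        rw [← Set.Ioc_union_Ioi_eq_Ioi he]
        exact hGIoc.union hGIoiE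
      have hsplit : ∫ t in Set.Ioi (0:ℝ), G t
          = (∫ t in Set.Ioc (0:ℝ) e, G t) + ∫ t in Set.Ioi e, G t := by
        rw [← Set.Ioc_union_Ioi_eq_Ioi he,
          setIntegral_union (Set.Ioc_disjoint_Ioi le_rfl) measurableSet_Ioi hGIoc hGIoiE]
      have hIoc : ∫ t in Set.Ioc (0:ℝ) e, G t = e ^ r / r := by
        rw [setIntegral_congr_fun measurableSet_Ioc (fun t ht => if_pos ht.2),
          ← intervalIntegral.integral_of_le he,
          integral_rpow (Or.inl (by linarith : (-1:ℝ) < r - 1)),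
          show r - 1 + 1 = r by ring, Real.zero_rpow hr0.ne']
        ring
      have hIoiE : ∫ t in Set.Ioi e, G t = 2 * I1 := by
        rw [shift_Ioi_integral G e, setIntegral_congr_fun measurableSet_Ioi hGshift,
          integral_const_mul]
      have hnnae : 0 ≤ᵐ[P] fun ω => Y ω ^ r :=
        Filter.Eventually.of_forall fun ω => Real.rpow_nonneg (hYnn ω) r
      have layer := hY.integral_eq_integral_meas_lt hnnae
      have cv := integral_comp_rpow_Ioi_of_pos
        (g := fun t => (P {a | t < Y a ^ r}).toReal) (p := r) hr0
      rw [layer]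
      simp only [measureReal_def]
      rw [← cv]
      have mono : (∫ s in Set.Ioi (0:ℝ),
            (r * s ^ (r - 1)) • (P {a | s ^ r < Y a ^ r}).toReal)
          ≤ ∫ s in Set.Ioi (0:ℝ), r * G s := by
        apply integral_mono_of_nonneg
        · filter_upwards [ae_restrict_mem measurableSet_Ioi] with s hs
          have hs' : (0:ℝ) < s := hs
          have : (0:ℝ) ≤ r * s ^ (r-1) := mul_nonneg hr0.le (Real.rpow_nonneg hs'.le _)
          exact mul_nonneg this ENNReal.toReal_nonneg
        · exact hGIoi.const_mul r
        · filter_upwards [ae_restrict_mem measurableSet_Ioi] with s hs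
          have hs' : (0:ℝ) < s := hs
          have hset : {a | s ^ r < Y a ^ r} = {a | s < Y a} := by
            ext a
            simp only [Set.mem_setOf_eq]
            constructor
            · intro h
              by_contra hle
              push_neg at hle
              exact absurd h (not_lt.mpr (Real.rpow_le_rpow (hYnn a) hle hr0.le))
            · intro h
              exact Real.rpow_lt_rpow hs'.le h hr0
          rw [smul_eq_mul, hset]
          have hcnn : (0:ℝ) ≤ r * s ^ (r-1) := mul_nonneg hr0.le (Real.rpow_nonneg hs'.le _)
          rcases le_or_gt s e with hse | hse
          · have hm : (P {a | s < Y a}).toReal ≤ 1 := by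
              have h1 := ENNReal.toReal_mono (measure_ne_top P Set.univ)
                (measure_mono (Set.subset_univ {a | s < Y a}))
              simpa using h1
            calc r * s ^ (r-1) * (P {a | s < Y a}).toReal
                ≤ r * s ^ (r-1) * 1 := mul_le_mul_of_nonneg_left hm hcnn
              _ = r * G s := by rw [hGdef]; simp only [if_pos hse]; ring
          · have htail' := htail (s - e) (by linarith)
            have hset2 : {ω | Y ω > e + (s - e)} = {a | s < Y a} := by
              ext a
              simp only [Set.mem_setOf_eq, gt_iff_lt]
              constructor <;> intro h <;> linarith
            rw [hset2] at htail'
            calc r * s ^ (r-1) * (P {a | s < Y a}).toReal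
                ≤ r * s ^ (r-1) * (2 * Real.exp (-(s-e)^2 / (2*σ^2))) :=
                  mul_le_mul_of_nonneg_left htail' hcnn
              _ = r * G s := by rw [hGdef]; simp only [if_neg (not_le.mpr hse)]; ring
      calc (∫ s in Set.Ioi (0:ℝ), (r * s ^ (r - 1)) • (P {a | s ^ r < Y a ^ r}).toReal)
          ≤ ∫ s in Set.Ioi (0:ℝ), r * G s := mono
        _ = r * ∫ s in Set.Ioi (0:ℝ), G s := integral_const_mul r G
        _ = r * (e ^ r / r + 2 * I1) := by rw [hsplit, hIoc, hIoiE]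
        _ = e ^ r + 2 * r * I1 := by field_simp
    · rw [integral_undef hY]
      have h2 : (0:ℝ) ≤ 2 * r * I1 := mul_nonneg (by linarith) I1nn
      have h3 : (0:ℝ) ≤ e ^ r := Real.rpow_nonneg he r
      linarith
  · -- Part 2
    have heσ : (0:ℝ) < e + σ := by linarith
    have hC : (0:ℝ) ≤ (e + σ) ^ r := Real.rpow_nonneg heσ.le r
    -- substitution t = σ s in I1
    have cv2 := integral_comp_mul_left_Ioi
      (fun t => (t + e) ^ (r - 1) * Real.exp (-t ^ 2 / (2 * σ ^ 2))) 0 hσ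
    rw [mul_zero, smul_eq_mul] at cv2
    have hI1eq : I1 = σ * ∫ s in Set.Ioi (0:ℝ),
        (σ * s + e) ^ (r - 1) * Real.exp (-s ^ 2 / 2) := by
      have harg : ∀ s : ℝ, -(σ * s) ^ 2 / (2 * σ ^ 2) = -s ^ 2 / 2 := by
        intro s
        field_simp
      have : (∫ s in Set.Ioi (0:ℝ),
          (σ * s + e) ^ (r - 1) * Real.exp (-(σ * s) ^ 2 / (2 * σ ^ 2))) = σ⁻¹ * I1 := cv2
      simp only [harg] at this
      rw [this]
      field_simp
    have hmono2 : σ * (∫ s in Set.Ioi (0:ℝ), (σ * s + e) ^ (r - 1) * Real.exp (-s ^ 2 / 2))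
        ≤ (e + σ) ^ r * I2 := by
      rw [← integral_const_mul, ← integral_const_mul]
      apply integral_mono_of_nonneg
      · filter_upwards [ae_restrict_mem measurableSet_Ioi] with s hs
        have hs' : (0:ℝ) < s := hs
        have h0 : (0:ℝ) ≤ (σ * s + e) ^ (r-1) := Real.rpow_nonneg (by nlinarith) _
        have hE := (Real.exp_pos (-s ^ 2 / 2)).le
        exact mul_nonneg hσ.le (mul_nonneg h0 hE)
      · exact I2int.const_mul _
      · filter_upwards [ae_restrict_mem measurableSet_Ioi] with s hs
        have hs' : (0:ℝ) < s := hs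
        have h1 : σ * s + e ≤ (e + σ) * max s 1 := by
          rcases le_total s 1 with h | h
          · rw [max_eq_right h]
            nlinarith
          · rw [max_eq_left h]
            nlinarith
        have hb1 : (0:ℝ) ≤ σ * s + e := by nlinarith
        have h2 : (σ * s + e) ^ (r-1) ≤ ((e + σ) * max s 1) ^ (r-1) :=
          Real.rpow_le_rpow hb1 h1 (by linarith)
        rw [Real.mul_rpow heσ.le (le_trans zero_le_one (le_max_right _ _))] at h2
        have h3 : σ * (σ * s + e) ^ (r-1) ≤ (e + σ) * ((e + σ) ^ (r-1) * (max s 1) ^ (r-1)) :=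
          mul_le_mul (by linarith) h2 (Real.rpow_nonneg hb1 _) heσ.le
        have h4 : (e + σ) * (e + σ) ^ (r-1) = (e + σ) ^ r := by
          rw [Real.rpow_sub heσ, Real.rpow_one]
          field_simp
        have hE : (0:ℝ) < Real.exp (-s ^ 2 / 2) := Real.exp_pos _
        calc σ * ((σ * s + e) ^ (r-1) * Real.exp (-s ^ 2 / 2))
            = (σ * (σ * s + e) ^ (r-1)) * Real.exp (-s ^ 2 / 2) := by ring
          _ ≤ ((e + σ) * ((e + σ) ^ (r-1) * (max s 1) ^ (r-1))) * Real.exp (-s ^ 2 / 2) :=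
              mul_le_mul_of_nonneg_right h3 hE.le
          _ = (e + σ) ^ r * ((max s 1) ^ (r-1) * Real.exp (-s ^ 2 / 2)) := by
              rw [← h4]; ring
    have hI1le : I1 ≤ (e + σ) ^ r * I2 := by rw [hI1eq]; exact hmono2
    -- lower bound on I2
    have hI2lb : Real.exp (-(1:ℝ)/2) ≤ I2 := by
      have hsub : (∫ t in Set.Ioc (0:ℝ) 1, (max t 1) ^ (r - 1) * Real.exp (-t ^ 2 / 2)) ≤ I2 := by
        apply setIntegral_mono_set I2int
        · filter_upwards [ae_restrict_mem measurableSet_Ioi] with t ht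
          exact mul_nonneg (Real.rpow_nonneg (le_trans zero_le_one (le_max_right _ _)) _)
            (Real.exp_pos _).le
        · exact HasSubset.Subset.eventuallyLE Set.Ioc_subset_Ioi_self
      have hconst : Real.exp (-(1:ℝ)/2)
          ≤ ∫ t in Set.Ioc (0:ℝ) 1, (max t 1) ^ (r - 1) * Real.exp (-t ^ 2 / 2) := by
        have hcint : IntegrableOn (fun _ : ℝ => Real.exp (-(1:ℝ)/2)) (Set.Ioc (0:ℝ) 1) := by
          refine integrableOn_const ?_
          rw [Real.volume_Ioc]
          exact ENNReal.ofReal_ne_top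
        have hmon := setIntegral_mono_on hcint (I2int.mono_set Set.Ioc_subset_Ioi_self)
          measurableSet_Ioc ?_
        · calc Real.exp (-(1:ℝ)/2)
              = (∫ _ in Set.Ioc (0:ℝ) 1, Real.exp (-(1:ℝ)/2)) := by
                rw [setIntegral_const, Real.volume_real_Ioc]
                norm_num
            _ ≤ _ := hmon
        · intro t ht
          have ht1 : 0 < t := ht.1
          have ht2 : t ≤ 1 := ht.2
          have hm1 : (1:ℝ) ≤ (max t 1) ^ (r-1) :=
            calc (1:ℝ) = (1:ℝ) ^ (r-1) := (Real.one_rpow _).symm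
              _ ≤ (max t 1) ^ (r-1) :=
                Real.rpow_le_rpow zero_le_one (le_max_right _ _) (by linarith)
          have hee : Real.exp (-(1:ℝ)/2) ≤ Real.exp (-t ^ 2 / 2) := by
            apply Real.exp_le_exp.mpr
            nlinarith
          calc Real.exp (-(1:ℝ)/2) ≤ Real.exp (-t ^ 2 / 2) := hee
            _ = 1 * Real.exp (-t ^ 2 / 2) := by ring
            _ ≤ (max t 1) ^ (r-1) * Real.exp (-t ^ 2 / 2) :=
                mul_le_mul_of_nonneg_right hm1 (Real.exp_pos _).le
      linarith
    have hI2six : (6:ℝ)⁻¹ ≤ I2 := by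
      have : (6:ℝ)⁻¹ ≤ Real.exp (-(1:ℝ)/2) := by
        have h := Real.add_one_le_exp (-(1:ℝ)/2)
        norm_num at h ⊢
        linarith
      linarith
    have her : e ^ r ≤ (e + σ) ^ r := Real.rpow_le_rpow he (by linarith) hr0.le
    have hkey : e ^ r ≤ 6 * r * ((e + σ) ^ r * I2) := by
      have h1 : (1:ℝ) ≤ 6 * r * I2 := by nlinarith
      nlinarith
    have h2 : 2 * r * I1 ≤ 2 * r * ((e + σ) ^ r * I2) :=
      mul_le_mul_of_nonneg_left hI1le (by linarith)
    calc e ^ r + 2 * r * I1 ≤ 6 * r * ((e + σ) ^ r * I2) + 2 * r * ((e + σ) ^ r * I2) := by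
          linarith
      _ = 8 * r * (e + σ) ^ r * I2 := by ring
end

section
/- Dudley-type integral estimate (Lemma A.4 of the paper): Let a > 0 and \sigma > 0 satisfy a\sigma < e - 1 (so that ln(1 + a\sigma) < 1 and ln ln^{-1}(1 + a\eta) > 0 for 0 < \eta \leq \sigma). Then \int_0^\sigma \sqrt{ ln( 1 / ln(1 + a\eta) ) } d\eta \leq (e/a) \cdot \sqrt{ ln(1/ln(1+a\sigma)) } / ln(1+a\sigma) \cdot ( 1 + 1/(2 ln(1/ln(1+a\sigma))) ). -/
open MeasureTheory

set_option maxHeartbeats 1000000 in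
/-- Lemma A.4 (Dudley-type integral estimate): for `a > 0`, `σ > 0` with `aσ < e - 1`,
`∫₀^σ √(ln(1/ln(1+aη))) dη ≤ (e/a) · √(ln(1/ln(1+aσ)))/ln(1+aσ) ·
  (1 + 1/(2 ln(1/ln(1+aσ))))`. -/
theorem dudley_type_integral_bound (a σ : ℝ) (ha : 0 < a) (hσ : 0 < σ)
    (h : a * σ < Real.exp 1 - 1) :
    ∫ η in Set.Ioc (0 : ℝ) σ, Real.sqrt (Real.log (1 / Real.log (1 + a * η))) ≤
      Real.exp 1 / a *
        (Real.sqrt (Real.log (1 / Real.log (1 + a * σ))) / Real.log (1 + a * σ)) *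
        (1 + 1 / (2 * Real.log (1 / Real.log (1 + a * σ)))) := by
  have haσ : 0 < a * σ := mul_pos ha hσ
  set L := Real.log (1 + a * σ) with hLdef
  have hL : 0 < L := Real.log_pos (by linarith)
  have hL1 : L < 1 := by
    have h1 : Real.log (1 + a * σ) < Real.log (Real.exp 1) :=
      Real.log_lt_log (by linarith) (by linarith)
    simpa [Real.log_exp] using h1
  set U := Real.log (1 / L) with hUdef
  have hU : 0 < U := Real.log_pos (one_lt_one_div hL hL1)
  have hsU : 0 < Real.sqrt U := Real.sqrt_pos.2 hU
  have hUneg : U = -Real.log L := by rw [hUdef, one_div, Real.log_inv]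
  clear_value L U
  -- pointwise bound
  have hpt : ∀ η ∈ Set.Ioc (0 : ℝ) σ,
      Real.sqrt (Real.log (1 / Real.log (1 + a * η))) ≤
        (Real.log σ - Real.log η + 2 * U) / (2 * Real.sqrt U) := by
    intro η hη
    obtain ⟨hη0, hησ⟩ := hη
    have haη : 0 < a * η := mul_pos ha hη0
    set l := Real.log (1 + a * η) with hldef
    have hl0 : 0 < l := Real.log_pos (by linarith)
    have hlL : l ≤ L := by
      rw [hldef, hLdef]
      exact Real.log_le_log (by linarith) (by nlinarith)
    have hl1 : l < 1 := lt_of_le_of_lt hlL hL1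
    -- Bernoulli: (1+aη)^(σ/η) ≥ 1 + aσ
    have hp : 1 ≤ σ / η := (one_le_div hη0).2 hησ
    have hbern : 1 + a * σ ≤ (1 + a * η) ^ (σ / η) := by
      have := one_add_mul_self_le_rpow_one_add (by linarith : (-1 : ℝ) ≤ a * η) hp
      have heq : σ / η * (a * η) = a * σ := by field_simp
      linarith [heq ▸ this]
    have hlg : L ≤ σ / η * l := by
      have h5 := Real.log_le_log (by linarith) hbern
      rw [Real.log_rpow (by linarith)] at h5
      rw [hldef, hLdef]
      exact h5
    have hmul : η * L ≤ σ * l := by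
      have h2 : L * η ≤ σ / η * l * η := mul_le_mul_of_nonneg_right hlg hη0.le
      have h3 : σ / η * l * η = σ * l := by field_simp
      nlinarith
    -- lower bound on l gives upper bound on g := log (1/l)
    set g := Real.log (1 / l) with hgdef
    have hg0 : 0 < g := Real.log_pos (one_lt_one_div hl0 hl1)
    have hgU : g ≤ Real.log σ - Real.log η + U := by
      have hlow : η * L / σ ≤ l := (div_le_iff₀ hσ).2 (by nlinarith)
      have hlowpos : 0 < η * L / σ := by positivity
      have := Real.log_le_log hlowpos hlow
      rw [Real.log_div (by positivity) hσ.ne', Real.log_mul hη0.ne' hL.ne'] at this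
      rw [hgdef, one_div, Real.log_inv, hUneg]
      linarith
    -- AM-GM : sqrt g ≤ (g + U) / (2 sqrt U)
    have key : 2 * Real.sqrt U * Real.sqrt g ≤ g + U := by
      nlinarith [sq_nonneg (Real.sqrt g - Real.sqrt U), Real.sq_sqrt hU.le,
        Real.sq_sqrt hg0.le, Real.sqrt_nonneg g, Real.sqrt_nonneg U]
    have h4 : Real.sqrt g ≤ (g + U) / (2 * Real.sqrt U) := by
      rw [le_div_iff₀ (by positivity)]
      nlinarith [Real.sqrt_nonneg g]
    refine h4.trans ?_
    exact div_le_div_of_nonneg_right (by linarith) (by positivity)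
  -- integrability and value of the comparison integral
  set G : ℝ → ℝ := fun x => x * Real.log σ - x * Real.log x + x with hGdef
  have hGc : ContinuousOn G (Set.Icc 0 σ) := by
    apply Continuous.continuousOn
    exact ((continuous_id.mul continuous_const).sub Real.continuous_mul_log).add continuous_id
  have hGd : ∀ x ∈ Set.Ioo (0 : ℝ) σ, HasDerivAt G (Real.log σ - Real.log x) x := by
    intro x hx
    have h1 : HasDerivAt (fun y : ℝ => y * Real.log σ) (Real.log σ) x :=
      hasDerivAt_mul_const _
    have h2 : HasDerivAt (fun y : ℝ => y * Real.log y) (Real.log x + 1) x :=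
      Real.hasDerivAt_mul_log hx.1.ne'
    have := (h1.sub h2).add (hasDerivAt_id x)
    rw [show Real.log σ - Real.log x = Real.log σ - (Real.log x + 1) + 1 by ring]
    exact this
  have hg'pos : ∀ x ∈ Set.Ioo (0 : ℝ) σ, 0 ≤ Real.log σ - Real.log x := by
    intro x hx
    have := Real.log_le_log hx.1 hx.2.le
    linarith
  have hint1 : IntegrableOn (fun x => Real.log σ - Real.log x) (Set.Ioc 0 σ) :=
    intervalIntegral.integrableOn_deriv_of_nonneg hGc hGd hg'pos
  have hintInterval : IntervalIntegrable (fun x => Real.log σ - Real.log x)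
      volume 0 σ := by
    rw [intervalIntegrable_iff_integrableOn_Ioc_of_le hσ.le]
    exact hint1
  have hval : ∫ x in Set.Ioc (0 : ℝ) σ, (Real.log σ - Real.log x) = σ := by
    rw [← intervalIntegral.integral_of_le hσ.le]
    have := intervalIntegral.integral_eq_sub_of_hasDeriv_right
      (f := G) (f' := fun x => Real.log σ - Real.log x)
      (by rw [Set.uIcc_of_le hσ.le]; exact hGc)
      (fun x hx => (hGd x (by simpa [min_eq_left hσ.le, max_eq_right hσ.le] using hx)).hasDerivWithinAt)
      hintInterval
    rw [this, hGdef]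
    simp
  have hconst : IntegrableOn (fun _ : ℝ => 2 * U) (Set.Ioc 0 σ) :=
    integrableOn_const measure_Ioc_lt_top.ne
  have hvalc : ∫ _ in Set.Ioc (0 : ℝ) σ, (2 * U) = 2 * U * σ := by
    rw [setIntegral_const, Real.volume_real_Ioc_of_le hσ.le, smul_eq_mul]
    ring
  set hfun : ℝ → ℝ :=
    fun η => (Real.log σ - Real.log η + 2 * U) / (2 * Real.sqrt U) with hhdef
  have hint_h : IntegrableOn hfun (Set.Ioc 0 σ) := (hint1.add hconst).div_const _
  have hval_h : ∫ η in Set.Ioc (0 : ℝ) σ, hfun η = (σ + 2 * U * σ) / (2 * Real.sqrt U) := by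
    rw [hhdef]
    simp only [div_eq_mul_inv]
    rw [integral_mul_const, integral_add hint1 hconst, hval, hvalc]
  -- integrability and comparison for the original integrand
  set f : ℝ → ℝ := fun η => Real.sqrt (Real.log (1 / Real.log (1 + a * η))) with hfdef
  have hfm : AEStronglyMeasurable f (volume.restrict (Set.Ioc (0 : ℝ) σ)) := by
    apply Measurable.aestronglyMeasurable
    rw [hfdef]
    exact Real.continuous_sqrt.measurable.comp (Real.measurable_log.comp
      (measurable_const.div (Real.measurable_log.comp
        ((measurable_id.const_mul a).const_add 1))))
  have hf_int : IntegrableOn f (Set.Ioc 0 σ) := by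
    refine hint_h.mono' hfm ?_
    filter_upwards [ae_restrict_mem measurableSet_Ioc] with η hη
    rw [Real.norm_eq_abs, abs_of_nonneg (Real.sqrt_nonneg _)]
    exact hpt η hη
  have hmain : ∫ η in Set.Ioc (0 : ℝ) σ, f η ≤ ∫ η in Set.Ioc (0 : ℝ) σ, hfun η :=
    setIntegral_mono_on hf_int hint_h measurableSet_Ioc hpt
  rw [hval_h] at hmain
  refine hmain.trans ?_
  -- final algebraic comparison
  set s := Real.sqrt U with hsdef
  have hU2 : s * s = U := Real.mul_self_sqrt hU.le
  clear_value s
  rw [← hU2]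
  have hs0 : s ≠ 0 := hsU.ne'
  have hσle : σ ≤ Real.exp 1 / (a * L) := by
    rw [le_div_iff₀ (by positivity)]
    have h1 : a * σ * L < a * σ := mul_lt_of_lt_one_right haσ hL1
    nlinarith
  have h2 : (σ + 2 * (s * s) * σ) / (2 * s) = σ * ((1 + 2 * (s * s)) / (2 * s)) := by
    ring
  have h3 : Real.exp 1 / a * (s / L) * (1 + 1 / (2 * (s * s))) =
      Real.exp 1 / (a * L) * ((1 + 2 * (s * s)) / (2 * s)) := by
    field_simp
    ring
  rw [h2, h3]
  apply mul_le_mul_of_nonneg_right hσle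
  apply div_nonneg
  · nlinarith
  · linarith
end
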